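/- Let A be a C*-algebra and let a, b be positive elements with ‖a - b‖ < δ for some δ > 0. Then (a - δ)₊ is Cuntz subequivalent to b. -/

import Mathlib

open Filter Topology

def CuntzBelow {A : Type*} [CStarAlgebra A] (a b : A) : Prop :=
  ∃ x : ℕ → A, Tendsto (fun n => ‖a - x n * b * star (x n)‖) atTop (𝓝 0)

noncomputable def cutoff {A : Type*} [CStarAlgebra A] (a : A) (δ : ℝ) : A :=
  cfc (fun t : ℝ => max (t - δ) 0) a

theorem stmt_5 {A : Type*} [CStarAlgebra A] [PartialOrder A] [StarOrderedRing A] (a b : A) (ha : 0 ≤ a) (hb : 0 ≤ b)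
    (δ : ℝ) (hδ : 0 < δ) (h : ‖a - b‖ < δ) :
    CuntzBelow (cutoff a δ) b := by
  have ha' : IsSelfAdjoint a := .of_nonneg ha
  set r : ℝ := ‖a - b‖ with hrdef
  have hr0 : 0 ≤ r := norm_nonneg _
  have hmax : ∀ t : ℝ, 0 < max t δ := fun t => lt_max_of_lt_right hδ
  have hmaxr : ∀ t : ℝ, 0 < max t δ - r := fun t => by
    have := le_max_right t δ; linarith
  set g : ℝ → ℝ := fun t => Real.sqrt (max (t - δ) 0 / max t δ) with hgdef
  set k : ℝ → ℝ := fun t => max (t - δ) 0 * (t - r) / max t δ with hkdef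
  set m : ℝ → ℝ := fun t => Real.sqrt (max t δ / (max t δ - r)) with hmdef
  have hk0 : ∀ t, 0 ≤ k t := by
    intro t
    rcases le_or_gt t δ with ht | ht
    · simp [hkdef, max_eq_right (by linarith : t - δ ≤ 0)]
    · exact div_nonneg (mul_nonneg (le_max_right _ _) (by linarith)) (hmax t).le
  have contgg : Continuous fun t : ℝ => max (t - δ) 0 / max t δ :=
    Continuous.div (by fun_prop) (by fun_prop) fun t => (hmax t).ne'
  have contg : Continuous g := Real.continuous_sqrt.comp contgg
  have contk : Continuous k :=
    Continuous.div (by fun_prop) (by fun_prop) fun t => (hmax t).ne'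
  have contm : Continuous m :=
    Real.continuous_sqrt.comp <| Continuous.div (by fun_prop) (by fun_prop)
      fun t => (hmaxr t).ne'
  have contsk : Continuous fun t => Real.sqrt (k t) := Real.continuous_sqrt.comp contk
  -- generic triple product lemma
  have triple : ∀ (u : A) (f₁ f₂ f₃ : ℝ → ℝ), Continuous f₁ → Continuous f₂ → Continuous f₃ →
      cfc f₁ u * cfc f₂ u * cfc f₃ u = cfc (fun t => f₁ t * f₂ t * f₃ t) u := by
    intro u f₁ f₂ f₃ h₁ h₂ h₃
    rw [← cfc_mul f₁ f₂ u h₁.continuousOn h₂.continuousOn,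
      ← cfc_mul (fun x => f₁ x * f₂ x) f₃ u (h₁.mul h₂).continuousOn h₃.continuousOn]
  set G : A := cfc g a with hGdef
  set M : A := cfc m a with hMdef
  set X : A := cfc (fun t => Real.sqrt (k t)) a with hXdef
  have hGsa : IsSelfAdjoint G := cfc_predicate g a
  have hMsa : IsSelfAdjoint M := cfc_predicate m a
  have hXsa : IsSelfAdjoint X := cfc_predicate _ a
  set c : A := G * b * G with hcdef
  set x : A := cfc k a with hxdef
  have hXX : X * X = x := by
    rw [hXdef, ← cfc_mul _ _ a contsk.continuousOn contsk.continuousOn]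
    exact cfc_congr fun t _ => Real.mul_self_sqrt (hk0 t)
  -- G * G
  have hGG : G * G = cfc (fun t => max (t - δ) 0 / max t δ) a := by
    rw [hGdef, ← cfc_mul g g a contg.continuousOn contg.continuousOn]
    exact cfc_congr fun t _ =>
      Real.mul_self_sqrt (div_nonneg (le_max_right _ _) (hmax t).le)
  -- x = cutoff - r • (G*G)
  have hxeq : x = cutoff a δ - r • (G * G) := by
    rw [hGG, ← cfc_const_mul r _ a contgg.continuousOn, cutoff,
      ← cfc_sub (fun t : ℝ => max (t - δ) 0) (fun x => r * (max (x - δ) 0 / max x δ)) a (by fun_prop) (continuous_const.mul contgg).continuousOn]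
    refine cfc_congr fun t _ => ?_
    rcases le_or_gt t δ with ht | ht
    · simp [hkdef, max_eq_right (by linarith : t - δ ≤ 0)]
    · have ht0 : t ≠ 0 := (hδ.trans ht).ne'
      rw [hkdef]
      simp only [max_eq_left ht.le, max_eq_left (by linarith : (0:ℝ) ≤ t - δ)]
      field_simp
  -- M * x * M = cutoff a δ
  have hMxM : M * x * M = cutoff a δ := by
    rw [hxdef, hMdef, triple a m k m contm contk contm]
    refine cfc_congr fun t _ => ?_
    have hmm : m t * m t = max t δ / (max t δ - r) :=
      Real.mul_self_sqrt (div_nonneg (hmax t).le (hmaxr t).le)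
    have heq : m t * k t * m t = m t * m t * k t := by ring
    rw [heq, hmm, hkdef]
    rcases le_or_gt t δ with ht | ht
    · simp [max_eq_right (by linarith : t - δ ≤ 0)]
    · have ht0 : t ≠ 0 := (hδ.trans ht).ne'
      have htr : t - r ≠ 0 := by
        have hmr := hmaxr t
        rw [max_eq_left ht.le] at hmr; linarith
      simp only [max_eq_left ht.le, max_eq_left (by linarith : (0:ℝ) ≤ t - δ)]
      field_simp
  -- order facts
  have hb' : IsSelfAdjoint b := .of_nonneg hb
  have hab_sa : IsSelfAdjoint (a - b) := ha'.sub hb'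
  have hle : a - b ≤ algebraMap ℝ A r := hab_sa.le_algebraMap_norm_self
  have hbar : 0 ≤ b - a + algebraMap ℝ A r := by
    have h2 := sub_nonneg.mpr hle
    have heq : algebraMap ℝ A r - (a - b) = b - a + algebraMap ℝ A r := by abel
    rwa [heq] at h2
  have hGaG : G * a * G = cutoff a δ := by
    have h1 : cfc g a * cfc (fun t : ℝ => t) a * cfc g a
        = cfc (fun t => g t * t * g t) a := triple a g _ g contg continuous_id contg
    rw [cfc_id' ℝ a ha'] at h1
    rw [hGdef, h1]
    refine cfc_congr fun t _ => ?_
    have hgg : g t * g t = max (t - δ) 0 / max t δ :=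
      Real.mul_self_sqrt (div_nonneg (le_max_right _ _) (hmax t).le)
    have heq : g t * t * g t = g t * g t * t := by ring
    rw [heq, hgg]
    rcases le_or_gt t δ with ht | ht
    · simp [max_eq_right (by linarith : t - δ ≤ 0)]
    · rw [max_eq_left ht.le, div_mul_cancel₀ _ (hδ.trans ht).ne']
  have hGsG : G * algebraMap ℝ A r * G = r • (G * G) := by
    rw [Algebra.algebraMap_eq_smul_one, mul_smul_comm, mul_one, smul_mul_assoc]
  have hsub : c - x = G * (b - a + algebraMap ℝ A r) * G := by
    rw [hxeq, hcdef, ← hGaG, mul_add, mul_sub, add_mul, sub_mul, hGsG]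
    abel
  have hx_le_c : x ≤ c := by
    rw [← sub_nonneg, hsub]
    exact hGsa.conjugate_nonneg hbar
  have hx0 : 0 ≤ x := cfc_nonneg fun t _ => hk0 t
  have hc0 : 0 ≤ c := hGsa.conjugate_nonneg hb
  have hcsa : IsSelfAdjoint c := .of_nonneg hc0
  have hspec : ∀ t ∈ spectrum ℝ c, 0 ≤ t := fun t ht => spectrum_nonneg_of_nonneg hc0 ht
  -- sequence functions on c
  have hden : ∀ (n : ℕ) (t : ℝ), 0 < max t 0 + 1/(n+1) := fun n t => by
    have h1 : (0:ℝ) < 1/(n+1) := by positivity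
    have h2 : (0:ℝ) ≤ max t 0 := le_max_right _ _
    linarith
  set p : ℕ → ℝ → ℝ := fun n t => (1/(n+1)) / (max t 0 + 1/(n+1)) with hpdef
  set q : ℕ → ℝ → ℝ := fun n t => Real.sqrt (1 / (max t 0 + 1/(n+1))) with hqdef
  set F : ℕ → ℝ → ℝ := fun n t => max t 0 / (max t 0 + 1/(n+1)) with hFdef
  have contp : ∀ n, Continuous (p n) := fun n =>
    Continuous.div (by fun_prop) (by fun_prop) fun t => (hden n t).ne'
  have contq : ∀ n, Continuous (q n) := fun n =>
    Real.continuous_sqrt.comp <| Continuous.div (by fun_prop) (by fun_prop)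
      fun t => (hden n t).ne'
  have contF : ∀ n, Continuous (F n) := fun n =>
    Continuous.div (by fun_prop) (by fun_prop) fun t => (hden n t).ne'
  -- Q n * c * Q n = cfc (F n) c
  have hQcQ : ∀ n, cfc (q n) c * c * cfc (q n) c = cfc (F n) c := by
    intro n
    have h1 : cfc (q n) c * cfc (fun t : ℝ => t) c * cfc (q n) c
        = cfc (fun t => q n t * t * q n t) c :=
      triple c (q n) _ (q n) (contq n) continuous_id (contq n)
    rw [cfc_id' ℝ c hcsa] at h1
    rw [h1]
    refine cfc_congr fun t ht => ?_
    have ht0 := hspec t ht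
    have hqq : q n t * q n t = 1 / (max t 0 + 1/(n+1)) :=
      Real.mul_self_sqrt (by positivity)
    have heq : q n t * t * q n t = q n t * q n t * t := by ring
    rw [heq, hqq, hFdef]
    simp only [max_eq_left ht0]
    have hd := hden n t
    rw [max_eq_left ht0] at hd
    field_simp
  -- F n + p n = 1
  have hFp : ∀ n, cfc (F n) c + cfc (p n) c = 1 := by
    intro n
    rw [← cfc_add c _ _ (contF n).continuousOn (contp n).continuousOn]
    have h1 : cfc (fun t => F n t + p n t) c = cfc (fun _ : ℝ => (1:ℝ)) c :=
      cfc_congr fun t _ => by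
        have hd := hden n t
        rw [hFdef, hpdef]
        field_simp
    rw [h1, cfc_const_one ℝ c]
  -- norm bound for P n * c * P n
  have hPcP : ∀ n, ‖cfc (p n) c * c * cfc (p n) c‖ ≤ 1/(n+1) := by
    intro n
    have h1 : cfc (p n) c * cfc (fun t : ℝ => t) c * cfc (p n) c
        = cfc (fun t => p n t * t * p n t) c :=
      triple c (p n) _ (p n) (contp n) continuous_id (contp n)
    rw [cfc_id' ℝ c hcsa] at h1
    rw [h1]
    refine norm_cfc_le (by positivity) fun t ht => ?_
    have ht0 := hspec t ht
    have hd := hden n t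
    have hp1 : p n t ≤ 1 := by
      rw [hpdef, div_le_one hd]
      have h2 : (0:ℝ) ≤ max t 0 := le_max_right _ _
      linarith
    have hp0 : 0 ≤ p n t := by
      rw [hpdef]; positivity
    have hpt : p n t * t ≤ 1/(n+1) := by
      simp only [hpdef, max_eq_left ht0]
      rw [div_mul_eq_mul_div, div_le_iff₀ (by rwa [max_eq_left ht0] at hd)]
      have h1' : (0:ℝ) < 1/(n+1) := by positivity
      nlinarith
    have hfin : p n t * t * p n t ≤ 1/(n+1) := by
      calc p n t * t * p n t ≤ p n t * t * 1 :=
            mul_le_mul_of_nonneg_left hp1 (by positivity)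
        _ = p n t * t := mul_one _
        _ ≤ 1/(n+1) := hpt
    have hfin0 : 0 ≤ p n t * t * p n t := by positivity
    rw [Real.norm_eq_abs, abs_of_nonneg hfin0]
    exact hfin
  -- abstract away all the concrete definitions
  clear_value G M X c x
  clear hxeq hGG hGaG hsub hGsG hle hbar
  -- the witness sequence
  refine ⟨fun n => M * X * cfc (q n) c * G, ?_⟩
  have key : ∀ n, ‖cutoff a δ - (M * X * cfc (q n) c * G) * b *
      star (M * X * cfc (q n) c * G)‖ ≤ (‖M‖ * ‖X‖ * ‖M‖) * Real.sqrt (1/(n+1)) := by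
    intro n
    obtain ⟨Q, hQdef⟩ : ∃ Q, cfc (q n) c = Q := ⟨_, rfl⟩
    obtain ⟨P, hPdef⟩ : ∃ P, cfc (p n) c = P := ⟨_, rfl⟩
    obtain ⟨Fn, hFndef⟩ : ∃ Fn, cfc (F n) c = Fn := ⟨_, rfl⟩
    have hQsa : IsSelfAdjoint Q := hQdef ▸ cfc_predicate _ c
    have hPsa : IsSelfAdjoint P := hPdef ▸ cfc_predicate _ c
    have hQcQ' : Q * c * Q = Fn := by rw [← hQdef, ← hFndef]; exact hQcQ n
    have hFp' : Fn + P = 1 := by rw [← hPdef, ← hFndef]; exact hFp n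
    have hPcP' : ‖P * c * P‖ ≤ 1/(n+1) := by rw [← hPdef]; exact hPcP n
    rw [hQdef]
    have hstar : star (M * X * Q * G) = G * Q * X * M := by
      simp only [star_mul, hGsa.star_eq, hQsa.star_eq, hXsa.star_eq, hMsa.star_eq, mul_assoc]
    have hwitness : (M * X * Q * G) * b * star (M * X * Q * G)
        = M * X * Fn * X * M := by
      rw [hstar, ← hQcQ', hcdef]
      simp only [mul_assoc]
    have hPX : P * X = X - Fn * X := by
      have h1 : (Fn + P) * X = X := by rw [hFp', one_mul]
      have h2 : Fn * X + P * X = X := by rw [← add_mul, h1]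
      linear_combination (norm := noncomm_ring) h2
    have hdiff : cutoff a δ - (M * X * Q * G) * b * star (M * X * Q * G)
        = (M * X) * P * (X * M) := by
      rw [hwitness, ← hMxM, ← hXX]
      have h3 : (M * X) * P * (X * M) = M * X * (P * X) * M := by
        simp only [mul_assoc]
      rw [h3, hPX]
      noncomm_ring
    -- estimate ‖P * X‖
    have hPXnorm : ‖P * X‖ ≤ Real.sqrt (1/(n+1)) := by
      have hsq : ‖P * X‖ * ‖P * X‖ = ‖P * x * P‖ := by
        rw [← CStarRing.norm_self_mul_star (x := P * X)]
        congr 1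
        rw [star_mul, hPsa.star_eq, hXsa.star_eq, ← hXX]
        simp only [mul_assoc]
      have hle1 : P * x * P ≤ P * c * P := hPsa.conjugate_le_conjugate hx_le_c
      have hge0 : 0 ≤ P * x * P := hPsa.conjugate_nonneg hx0
      have hle2 : ‖P * x * P‖ ≤ ‖P * c * P‖ :=
        CStarAlgebra.norm_le_norm_of_nonneg_of_le hge0 hle1
      have hle3 : ‖P * X‖ * ‖P * X‖ ≤ 1/(n+1) := by
        rw [hsq]; exact hle2.trans hPcP'
      calc ‖P * X‖ = Real.sqrt (‖P * X‖ * ‖P * X‖) :=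
            (Real.sqrt_mul_self (norm_nonneg _)).symm
        _ ≤ Real.sqrt (1/(n+1)) := Real.sqrt_le_sqrt hle3
    calc ‖cutoff a δ - (M * X * Q * G) * b * star (M * X * Q * G)‖
        = ‖(M * X) * P * (X * M)‖ := by rw [hdiff]
      _ ≤ ‖M * X * P‖ * ‖X * M‖ := norm_mul_le _ _
      _ ≤ (‖M‖ * ‖X * P‖) * ‖X * M‖ := by
          refine mul_le_mul_of_nonneg_right ?_ (norm_nonneg _)
          calc ‖M * X * P‖ = ‖M * (X * P)‖ := by rw [mul_assoc]
            _ ≤ ‖M‖ * ‖X * P‖ := norm_mul_le _ _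
      _ ≤ (‖M‖ * ‖X * P‖) * (‖X‖ * ‖M‖) := by
          refine mul_le_mul_of_nonneg_left (norm_mul_le _ _) (by positivity)
      _ = (‖M‖ * ‖X‖ * ‖M‖) * ‖X * P‖ := by ring
      _ ≤ (‖M‖ * ‖X‖ * ‖M‖) * Real.sqrt (1/(n+1)) := by
          refine mul_le_mul_of_nonneg_left ?_ (by positivity)
          calc ‖X * P‖ = ‖star (X * P)‖ := (norm_star _).symm
            _ = ‖P * X‖ := by rw [star_mul, hPsa.star_eq, hXsa.star_eq]
            _ ≤ Real.sqrt (1/(n+1)) := hPXnorm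
  have htend : Tendsto (fun n : ℕ => (‖M‖ * ‖X‖ * ‖M‖) * Real.sqrt (1/(n+1))) atTop (𝓝 0) := by
    have h1 : Tendsto (fun n : ℕ => (1:ℝ)/(n+1)) atTop (𝓝 0) :=
      tendsto_one_div_add_atTop_nhds_zero_nat
    have h2 : Tendsto (fun n : ℕ => Real.sqrt (1/(n+1))) atTop (𝓝 0) := by
      have h3 := (Real.continuous_sqrt.tendsto 0).comp h1
      simpa only [Function.comp_def, Real.sqrt_zero] using h3
    simpa only [mul_zero] using h2.const_mul (‖M‖ * ‖X‖ * ‖M‖)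
  exact squeeze_zero (fun n => norm_nonneg _) key htend
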